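/- Let G be a locally compact group acting continuously on a compact Hausdorff topological space X, let ν be a finite regular Borel measure on X, and let κ : G × X → (0,∞) be a continuous strictly positive function such that for every g ∈ G the pushforward measure g_*ν has density κ(g, ·) with respect to ν (i.e., g_*ν = κ(g, ·)·ν). Let λ be the Koopman representation of G on L²(X, ν), (λ(g)ξ)(x) = κ(g, x)^{1/2} ξ(g⁻¹·x), and let 1 denote the constant function 1 on X. Let Γ be a discrete subgroup of G and let η ∈ L²(X, ν) be ν-almost everywhere nonnegative. Then the matrix coefficient g ↦ ⟨λ(g)1, η⟩ = ∫_X κ(g, x)^{1/2} η(x) dν(x) is stable on G relative to Γ: there exist a relatively compact neighborhood V of the identity and constants C, c > 0 such that c·⟨λ(γ)1, η⟩ ≤ ⟨λ(γg)1, η⟩ ≤ C·⟨λ(γ)1, η⟩ for all g ∈ V and all γ ∈ Γ. -/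

import Mathlib

open MeasureTheory
open scoped ComplexOrder

/-- Let `G` be a locally compact group acting continuously on a compact
Hausdorff space `X`, `ν` a finite regular Borel measure on `X`, and
`κ : G × X → (0, ∞)` a continuous strictly positive cocycle with `g_*ν = κ(g, ·)·ν`.
For a discrete subgroup `Γ` of `G` and a `ν`-a.e. nonnegative `η ∈ L²(X, ν)`, the matrix
coefficient `g ↦ ⟨λ(g)1, η⟩ = ∫_X κ(g, x)^{1/2} η(x) dν(x)` of the associated Koopman
representation is stable on `G` relative to `Γ`. -/
theorem stmt12
    {G : Type*} [Group G] [TopologicalSpace G] [IsTopologicalGroup G]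
    [LocallyCompactSpace G] [MeasurableSpace G] [BorelSpace G]
    {X : Type*} [TopologicalSpace X] [CompactSpace X] [T2Space X]
    [MeasurableSpace X] [BorelSpace X]
    [MulAction G X] [ContinuousSMul G X]
    (ν : Measure X) [IsFiniteMeasure ν] [ν.Regular]
    (κ : G → X → ℝ) (hκ_cont : Continuous fun p : G × X => κ p.1 p.2)
    (hκ_pos : ∀ g x, 0 < κ g x)
    (hκ_rn : ∀ g : G, ν.map (fun x => g • x)
      = ν.withDensity fun x => ENNReal.ofReal (κ g x))
    (Γ : Subgroup G) (hΓ : DiscreteTopology Γ)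
    (η : Lp ℂ 2 ν) (hη : ∀ᵐ x ∂ν, 0 ≤ η x) :
    ∃ V : Set G, V ∈ nhds (1 : G) ∧ IsCompact (closure V) ∧
      ∃ C > (0 : ℝ), ∃ c > (0 : ℝ), ∀ g ∈ V, ∀ γ : Γ,
        c * (∫ x, Real.sqrt (κ (γ : G) x) * (η x).re ∂ν)
            ≤ (∫ x, Real.sqrt (κ ((γ : G) * g) x) * (η x).re ∂ν) ∧
        (∫ x, Real.sqrt (κ ((γ : G) * g) x) * (η x).re ∂ν)
            ≤ C * (∫ x, Real.sqrt (κ (γ : G) x) * (η x).re ∂ν) := by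
  have hf_int : Integrable (fun x => (η x).re) ν := by
    have := ((Lp.memLp η).integrable one_le_two).re
    simpa using this
  have hf_nn : ∀ᵐ x ∂ν, 0 ≤ (η x).re := by
    filter_upwards [hη] with x hx
    simpa using (Complex.le_def.mp hx).1
  obtain ⟨K, hK1, hKc, hKcl⟩ := exists_mem_nhds_isCompact_isClosed (1 : G)
  refine ⟨K, hK1, by rwa [hKcl.closure_eq], ?_⟩
  rcases isEmpty_or_nonempty X with hX | hX
  · refine ⟨1, one_pos, 1, one_pos, fun g hg γ => ?_⟩
    simp [ν.eq_zero_of_isEmpty]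
  -- continuity and measurability helpers
  have hcont : ∀ h : G, Continuous (κ h) := fun h =>
    hκ_cont.comp (continuous_const.prodMk continuous_id)
  have hmeas : ∀ h : G, Measurable fun x => ENNReal.ofReal (κ h x) := fun h =>
    ENNReal.measurable_ofReal.comp (hcont h).measurable
  -- min and max of κ on K × X
  have hSne : (K ×ˢ (Set.univ : Set X)).Nonempty :=
    ⟨(1, Classical.arbitrary X), mem_of_mem_nhds hK1, trivial⟩
  have hScomp : IsCompact (K ×ˢ (Set.univ : Set X)) := hKc.prod isCompact_univ
  obtain ⟨pm, _, hmin⟩ := hScomp.exists_isMinOn hSne hκ_cont.continuousOn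
  obtain ⟨pM, _, hmax⟩ := hScomp.exists_isMaxOn hSne hκ_cont.continuousOn
  set m := κ pm.1 pm.2 with hm_def
  set M := κ pM.1 pM.2 with hM_def
  have hm : 0 < m := hκ_pos _ _
  have hM : 0 < M := hκ_pos _ _
  -- integrability of the integrands
  have hint : ∀ h : G, Integrable (fun x => Real.sqrt (κ h x) * (η x).re) ν := by
    intro h
    obtain ⟨pB, -, hB⟩ := (isCompact_univ (X := X)).exists_isMaxOn
      ⟨Classical.arbitrary X, trivial⟩ (hcont h).continuousOn
    refine hf_int.bdd_mul (c := Real.sqrt (κ h pB)) ((hcont h).sqrt.aestronglyMeasurable)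
      (Filter.Eventually.of_forall fun x => ?_)
    rw [Real.norm_eq_abs, abs_of_nonneg (Real.sqrt_nonneg _)]
    exact Real.sqrt_le_sqrt (hB (Set.mem_univ x))
  -- cocycle identity (a.e.)
  have key : ∀ γ g : G, ∀ᵐ x ∂ν, κ (γ * g) x = κ γ x * κ g (γ⁻¹ • x) := by
    intro γ g
    have hTγ : Measurable fun x : X => γ • x := (continuous_const_smul γ).measurable
    have hTg : Measurable fun x : X => g • x := (continuous_const_smul g).measurable
    have hmeas2 : Measurable fun x : X => ENNReal.ofReal (κ g (γ⁻¹ • x)) :=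
      ENNReal.measurable_ofReal.comp
        (((hcont g).comp (continuous_const_smul γ⁻¹)).measurable)
    have h1 : ν.map (fun x => (γ * g) • x) = (ν.map fun x => g • x).map fun x => γ • x := by
      rw [Measure.map_map hTγ hTg]
      congr 1; funext x; simp [mul_smul]
    have h2 : ((ν.withDensity fun x => ENNReal.ofReal (κ g x)).map fun x => γ • x)
        = (ν.map fun x => γ • x).withDensity fun x => ENNReal.ofReal (κ g (γ⁻¹ • x)) := by
      ext s hs
      rw [Measure.map_apply hTγ hs, withDensity_apply _ (hTγ hs), withDensity_apply _ hs,
        setLIntegral_map hs hmeas2 hTγ]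
      refine lintegral_congr fun x => ?_
      rw [inv_smul_smul]
    have h3 : ν.withDensity (fun x => ENNReal.ofReal (κ (γ * g) x))
        = ν.withDensity
            ((fun x => ENNReal.ofReal (κ γ x)) * fun x => ENNReal.ofReal (κ g (γ⁻¹ • x))) := by
      calc ν.withDensity (fun x => ENNReal.ofReal (κ (γ * g) x))
          = ν.map (fun x => (γ * g) • x) := (hκ_rn _).symm
        _ = (ν.map fun x => g • x).map fun x => γ • x := h1
        _ = ((ν.withDensity fun x => ENNReal.ofReal (κ g x)).map fun x => γ • x) := by
            rw [hκ_rn]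
        _ = (ν.map fun x => γ • x).withDensity
              (fun x => ENNReal.ofReal (κ g (γ⁻¹ • x))) := h2
        _ = (ν.withDensity fun x => ENNReal.ofReal (κ γ x)).withDensity
              (fun x => ENNReal.ofReal (κ g (γ⁻¹ • x))) := by rw [hκ_rn]
        _ = ν.withDensity
              ((fun x => ENNReal.ofReal (κ γ x)) * fun x => ENNReal.ofReal (κ g (γ⁻¹ • x))) :=
            (withDensity_mul ν (hmeas γ) hmeas2).symm
    have hae := (withDensity_eq_iff_of_sigmaFinite (hmeas (γ * g)).aemeasurable
      ((hmeas γ).mul hmeas2).aemeasurable).mp h3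
    filter_upwards [hae] with x hx
    have hx' : ENNReal.ofReal (κ (γ * g) x)
        = ENNReal.ofReal (κ γ x * κ g (γ⁻¹ • x)) := by
      rw [ENNReal.ofReal_mul (hκ_pos γ x).le]; exact hx
    exact (ENNReal.ofReal_eq_ofReal_iff (hκ_pos _ _).le
      (mul_nonneg (hκ_pos _ _).le (hκ_pos _ _).le)).mp hx'
  refine ⟨Real.sqrt M, Real.sqrt_pos.mpr hM, Real.sqrt m, Real.sqrt_pos.mpr hm,
    fun g hg γ => ?_⟩
  set a : G := (γ : G)
  constructor
  · -- lower bound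
    have hle : ∀ᵐ x ∂ν, Real.sqrt m * (Real.sqrt (κ a x) * (η x).re)
        ≤ Real.sqrt (κ (a * g) x) * (η x).re := by
      filter_upwards [key a g, hf_nn] with x hx hfx
      rw [hx, Real.sqrt_mul (hκ_pos a x).le]
      have h1 : Real.sqrt m ≤ Real.sqrt (κ g (a⁻¹ • x)) :=
        Real.sqrt_le_sqrt (hmin (Set.mk_mem_prod hg (Set.mem_univ _)))
      have h2 : Real.sqrt (κ a x) * (η x).re * Real.sqrt m
          ≤ Real.sqrt (κ a x) * (η x).re * Real.sqrt (κ g (a⁻¹ • x)) :=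
        mul_le_mul_of_nonneg_left h1 (mul_nonneg (Real.sqrt_nonneg _) hfx)
      calc Real.sqrt m * (Real.sqrt (κ a x) * (η x).re)
          = Real.sqrt (κ a x) * (η x).re * Real.sqrt m := by ring
        _ ≤ Real.sqrt (κ a x) * (η x).re * Real.sqrt (κ g (a⁻¹ • x)) := h2
        _ = Real.sqrt (κ a x) * Real.sqrt (κ g (a⁻¹ • x)) * (η x).re := by ring
    have := integral_mono_ae ((hint a).const_mul (Real.sqrt m)) (hint (a * g)) hle
    rwa [integral_const_mul] at this
  · -- upper bound
    have hle : ∀ᵐ x ∂ν, Real.sqrt (κ (a * g) x) * (η x).re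
        ≤ Real.sqrt M * (Real.sqrt (κ a x) * (η x).re) := by
      filter_upwards [key a g, hf_nn] with x hx hfx
      rw [hx, Real.sqrt_mul (hκ_pos a x).le]
      have h1 : Real.sqrt (κ g (a⁻¹ • x)) ≤ Real.sqrt M :=
        Real.sqrt_le_sqrt (hmax (Set.mk_mem_prod hg (Set.mem_univ _)))
      have h2 : Real.sqrt (κ a x) * (η x).re * Real.sqrt (κ g (a⁻¹ • x))
          ≤ Real.sqrt (κ a x) * (η x).re * Real.sqrt M :=
        mul_le_mul_of_nonneg_left h1 (mul_nonneg (Real.sqrt_nonneg _) hfx)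
      calc Real.sqrt (κ a x) * Real.sqrt (κ g (a⁻¹ • x)) * (η x).re
          = Real.sqrt (κ a x) * (η x).re * Real.sqrt (κ g (a⁻¹ • x)) := by ring
        _ ≤ Real.sqrt (κ a x) * (η x).re * Real.sqrt M := h2
        _ = Real.sqrt M * (Real.sqrt (κ a x) * (η x).re) := by ring
    have := integral_mono_ae (hint (a * g)) ((hint a).const_mul (Real.sqrt M)) hle
    rwa [integral_const_mul] at this
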